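/- Every crown of a graph G is contained in a crown of maximum cardinality. -/

import Mathlib

open Finset

variable {V : Type*}

namespace CrownPaper

variable [Fintype V] [DecidableEq V]

/-- The (open) neighborhood of a finite set of vertices. -/
def nbrs (G : SimpleGraph V) [DecidableRel G.Adj] (A : Finset V) : Finset V :=
  univ.filter (fun v => ∃ a ∈ A, G.Adj v a)

/-- The closed neighborhood `N[A] = A ∪ N(A)`. -/
def closedNbrs (G : SimpleGraph V) [DecidableRel G.Adj] (A : Finset V) : Finset V :=
  A ∪ nbrs G A

/-- `S` is an independent set of `G`. -/
def IsIndep (G : SimpleGraph V) (S : Finset V) : Prop :=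
  ∀ a ∈ S, ∀ b ∈ S, ¬ G.Adj a b

/-- The difference `d(S) = |S| - |N(S)|`. -/
def diff (G : SimpleGraph V) [DecidableRel G.Adj] (S : Finset V) : ℤ :=
  (S.card : ℤ) - ((nbrs G S).card : ℤ)

/-- `S` is a critical independent set. -/
def IsCritIndep (G : SimpleGraph V) [DecidableRel G.Adj] (S : Finset V) : Prop :=
  IsIndep G S ∧ ∀ I : Finset V, IsIndep G I → diff G I ≤ diff G S

/-- `S` is a crown: an independent set with a matching from `N(S)` into `S`. -/
def IsCrown (G : SimpleGraph V) [DecidableRel G.Adj] (S : Finset V) : Prop :=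
  IsIndep G S ∧ ∃ f : V → V, (∀ v ∈ nbrs G S, f v ∈ S ∧ G.Adj v (f v)) ∧
    Set.InjOn f (nbrs G S : Set V)

/-- `S` is a local maximum independent set: a maximum independent set of `G[N[S]]`. -/
def IsLocalMaxIndep (G : SimpleGraph V) [DecidableRel G.Adj] (S : Finset V) : Prop :=
  IsIndep G S ∧ ∀ I : Finset V, IsIndep G I → I ⊆ closedNbrs G S → I.card ≤ S.card

/-- The independence number. -/
noncomputable def alpha (G : SimpleGraph V) : ℕ :=
  sSup {n | ∃ S : Finset V, IsIndep G S ∧ S.card = n}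

/-- `M` is a matching of `G`, given as a finite set of (ordered) edges. -/
def IsMatching (G : SimpleGraph V) (M : Finset (V × V)) : Prop :=
  (∀ e ∈ M, G.Adj e.1 e.2) ∧
  ∀ e ∈ M, ∀ e' ∈ M, e ≠ e' →
    e.1 ≠ e'.1 ∧ e.1 ≠ e'.2 ∧ e.2 ≠ e'.1 ∧ e.2 ≠ e'.2

/-- The matching number. -/
noncomputable def mu (G : SimpleGraph V) : ℕ :=
  sSup {n | ∃ M : Finset (V × V), IsMatching G M ∧ M.card = n}

/-- `G` has a perfect matching. -/
def HasPerfectMatching (G : SimpleGraph V) : Prop :=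
  ∃ M : Finset (V × V), IsMatching G M ∧ ∀ v : V, ∃ e ∈ M, v = e.1 ∨ v = e.2

/-- `G` is a König–Egerváry graph: `α(G) + μ(G) = |V(G)|`. -/
def IsKonigEgervary (G : SimpleGraph V) : Prop :=
  alpha G + mu G = Fintype.card V

/-- `G` is bipartite. -/
def IsBipartite (G : SimpleGraph V) : Prop :=
  ∃ X : Set V, ∀ a b : V, G.Adj a b → (a ∈ X ↔ b ∉ X)

end CrownPaper

open CrownPaper

lemma CrownPaper.mem_nbrs_iff (G : SimpleGraph V) [Fintype V] [DecidableEq V]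
    [DecidableRel G.Adj] {A : Finset V} {v : V} :
    v ∈ nbrs G A ↔ ∃ a ∈ A, G.Adj v a := by
  simp [nbrs]

/-- Crown combination: `S ∪ (T \ N[S])` is a crown of size at least `|T|`. -/
lemma CrownPaper.crown_union (G : SimpleGraph V) [Fintype V] [DecidableEq V]
    [DecidableRel G.Adj] {S T : Finset V} (hS : IsCrown G S) (hT : IsCrown G T) :
    IsCrown G (S ∪ (T \ closedNbrs G S)) ∧
      T.card ≤ (S ∪ (T \ closedNbrs G S)).card := by
  classical
  obtain ⟨hSind, f, hf, hfinj⟩ := hS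
  obtain ⟨hTind, g, hg, hginj⟩ := hT
  set B' : Finset V := S ∪ (T \ closedNbrs G S) with hB'
  -- independence of B'
  have hScN : S ⊆ closedNbrs G S := subset_union_left
  have hindep : IsIndep G B' := by
    intro a ha b hb hadj
    rcases mem_union.1 ha with haS | haT <;> rcases mem_union.1 hb with hbS | hbT
    · exact hSind a haS b hbS hadj
    · rcases mem_sdiff.1 hbT with ⟨hbT', hbN⟩
      exact hbN (mem_union_right _ (mem_nbrs_iff G |>.2 ⟨a, haS, hadj.symm⟩))
    · rcases mem_sdiff.1 haT with ⟨haT', haN⟩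
      exact haN (mem_union_right _ (mem_nbrs_iff G |>.2 ⟨b, hbS, hadj⟩))
    · exact hTind a (mem_sdiff.1 haT).1 b (mem_sdiff.1 hbT).1 hadj
  -- the left side still to be matched
  set L : Finset V := nbrs G B' \ nbrs G S with hL
  set tfun : V → Finset V := fun v => (T \ closedNbrs G S).filter (fun u => G.Adj v u)
    with htfun
  -- elements of L have all needed properties
  have hLprops : ∀ a ∈ L, a ∉ nbrs G S ∧ a ∉ S ∧ ∃ b ∈ T \ closedNbrs G S, G.Adj a b := by
    intro a ha
    rcases mem_sdiff.1 ha with ⟨haB, haNS⟩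
    obtain ⟨b, hbB, hab⟩ := (mem_nbrs_iff G).1 haB
    have haS : a ∉ S := by
      intro haS
      exact hindep a (mem_union_left _ haS) b hbB hab
    refine ⟨haNS, haS, ?_⟩
    rcases mem_union.1 hbB with hbS | hbT
    · exact absurd ((mem_nbrs_iff G).2 ⟨b, hbS, hab⟩) haNS
    · exact ⟨b, hbT, hab⟩
  -- Hall's condition for matching L into T \ N[S]
  have hall : ∀ s : Finset {x // x ∈ L}, s.card ≤ (s.biUnion fun i => tfun i.1).card := by
    intro s
    set A2 : Finset V := s.image Subtype.val with hA2
    have hcardA2 : A2.card = s.card := Finset.card_image_of_injective _ Subtype.val_injective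
    have hA2L : ∀ a ∈ A2, a ∈ L := by
      intro a ha; obtain ⟨x, hx, rfl⟩ := mem_image.1 ha; exact x.2
    set Y : Finset V := (T ∩ nbrs G S).image f with hY
    have hYS : ∀ y ∈ Y, y ∈ S := by
      intro y hy; obtain ⟨x, hx, rfl⟩ := mem_image.1 hy
      exact (hf x (mem_inter.1 hx).2).1
    set A2' : Finset V := A2 ∪ Y with hA2'
    have hA2'NT : ∀ x ∈ A2', x ∈ nbrs G T := by
      intro x hx
      rcases mem_union.1 hx with hx | hx
      · obtain ⟨_, _, b, hb, hab⟩ := hLprops x (hA2L x hx)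
        exact (mem_nbrs_iff G).2 ⟨b, (mem_sdiff.1 hb).1, hab⟩
      · obtain ⟨z, hz, rfl⟩ := mem_image.1 hx
        rcases mem_inter.1 hz with ⟨hzT, hzN⟩
        exact (mem_nbrs_iff G).2 ⟨z, hzT, (hf z hzN).2.symm⟩
    set W : Finset V := T.filter (fun w => ∃ a ∈ A2', G.Adj a w) with hW
    have hA2'W : A2'.card ≤ W.card := by
      apply Finset.card_le_card_of_injOn g
      · intro x hx
        have hx' := hA2'NT x hx
        exact mem_filter.2 ⟨(hg x hx').1, x, hx, (hg x hx').2⟩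
      · intro x hx y hy hxy
        exact hginj (hA2'NT x (by simpa using hx)) (hA2'NT y (by simpa using hy)) hxy
    have hWS : ∀ w ∈ W, w ∉ S := by
      intro w hw hwS
      rcases mem_filter.1 hw with ⟨hwT, a, ha, haw⟩
      rcases mem_union.1 ha with ha | ha
      · exact (hLprops a (hA2L a ha)).1 ((mem_nbrs_iff G).2 ⟨w, hwS, haw⟩)
      · exact hindep a (mem_union_left _ (hYS a ha)) w (mem_union_left _ hwS) haw
    set Y' : Finset V := W.filter (fun w => w ∈ nbrs G S) with hY'
    set P : Finset V := W.filter (fun w => w ∉ nbrs G S) with hP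
    have hY'Y : Y'.card ≤ Y.card := by
      apply Finset.card_le_card_of_injOn f
      · intro w hw
        rcases mem_filter.1 hw with ⟨hwW, hwN⟩
        exact mem_image.2 ⟨w, mem_inter.2 ⟨(mem_filter.1 hwW).1, hwN⟩, rfl⟩
      · intro x hx y hy hxy
        have hx' := mem_filter.1 (mem_coe.1 hx)
        have hy' := mem_filter.1 (mem_coe.1 hy)
        exact hfinj (mem_coe.2 hx'.2) (mem_coe.2 hy'.2) hxy
    have hWsplit : Y'.card + P.card = W.card :=
      Finset.card_filter_add_card_filter_not _
    have hA2'card : A2'.card = A2.card + Y.card := by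
      rw [hA2', Finset.card_union_of_disjoint]
      exact Finset.disjoint_left.2 fun a ha hay => (hLprops a (hA2L a ha)).2.1 (hYS a hay)
    have hA2P : A2.card ≤ P.card := by omega
    have hPsub : P ⊆ A2.biUnion tfun := by
      intro p hp
      rcases mem_filter.1 hp with ⟨hpW, hpN⟩
      rcases mem_filter.1 hpW with ⟨hpT, a, ha, hap⟩
      have haA2 : a ∈ A2 := by
        rcases mem_union.1 ha with ha | ha
        · exact ha
        · exact absurd ((mem_nbrs_iff G).2 ⟨a, hYS a ha, hap.symm⟩) hpN
      refine mem_biUnion.2 ⟨a, haA2, mem_filter.2 ⟨mem_sdiff.2 ⟨hpT, ?_⟩, hap⟩⟩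
      intro hpcN
      rcases mem_union.1 hpcN with h | h
      · exact hWS p hpW h
      · exact hpN h
    calc s.card = A2.card := hcardA2.symm
      _ ≤ P.card := hA2P
      _ ≤ (A2.biUnion tfun).card := Finset.card_le_card hPsub
      _ = (s.biUnion fun i => tfun i.1).card := by rw [hA2, Finset.image_biUnion]
  obtain ⟨h, hhinj, hhmem⟩ := (Finset.all_card_le_biUnion_card_iff_exists_injective
    (fun i : {x // x ∈ L} => tfun i.1)).1 hall
  -- the combined matching
  refine ⟨⟨hindep, fun v => if hv : v ∈ nbrs G S then f v
      else if hv2 : v ∈ L then h ⟨v, hv2⟩ else v, ?_, ?_⟩, ?_⟩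
  · intro v hv
    by_cases hvS : v ∈ nbrs G S
    · simp only [hvS, dif_pos]
      exact ⟨mem_union_left _ (hf v hvS).1, (hf v hvS).2⟩
    · have hvL : v ∈ L := mem_sdiff.2 ⟨hv, hvS⟩
      simp only [hvS, hvL, dif_pos, dif_neg, not_false_iff]
      have := hhmem ⟨v, hvL⟩
      rcases mem_filter.1 this with ⟨hmem, hadj⟩
      exact ⟨mem_union_right _ hmem, hadj⟩
  · intro u hu v hv huv
    simp only [mem_coe] at hu hv
    have key : ∀ w, w ∈ nbrs G B' → w ∉ nbrs G S →
        (if hw : w ∈ nbrs G S then f w else if hw2 : w ∈ L then h ⟨w, hw2⟩ else w)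
          ∈ T \ closedNbrs G S := by
      intro w hw hwS
      have hwL : w ∈ L := mem_sdiff.2 ⟨hw, hwS⟩
      simp only [hwS, hwL, dif_pos, dif_neg, not_false_iff]
      exact (mem_filter.1 (hhmem ⟨w, hwL⟩)).1
    by_cases huS : u ∈ nbrs G S <;> by_cases hvS : v ∈ nbrs G S
    · simp only [huS, hvS, dif_pos] at huv
      exact hfinj huS hvS huv
    · have := key v hv hvS
      simp only [huS, dif_pos] at huv
      rw [← huv] at this
      exact absurd (hScN (hf u huS).1) (mem_sdiff.1 this).2
    · have := key u hu huS
      simp only [hvS, dif_pos] at huv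
      rw [huv] at this
      exact absurd (hScN (hf v hvS).1) (mem_sdiff.1 this).2
    · have huL : u ∈ L := mem_sdiff.2 ⟨hu, huS⟩
      have hvL : v ∈ L := mem_sdiff.2 ⟨hv, hvS⟩
      simp only [huS, hvS, huL, hvL, dif_pos, dif_neg, not_false_iff] at huv
      exact congrArg Subtype.val (hhinj huv)
  -- the cardinality bound
  · have hdisj : Disjoint S (T \ closedNbrs G S) :=
      Finset.disjoint_left.2 fun a ha ha' => (mem_sdiff.1 ha').2 (hScN ha)
    have hcardB' : B'.card = S.card + (T \ closedNbrs G S).card :=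
      Finset.card_union_of_disjoint hdisj
    have hinterS : (T ∩ closedNbrs G S).card ≤ S.card := by
      apply Finset.card_le_card_of_injOn (fun x => if x ∈ S then x else f x)
      · intro x hx
        by_cases hxS : x ∈ S
        · beta_reduce; rw [if_pos hxS]; exact hxS
        · rcases mem_inter.1 hx with ⟨hxT, hxcN⟩
          rcases mem_union.1 hxcN with h | h
          · exact absurd h hxS
          · simpa [hxS] using (hf x h).1
      · intro x hx y hy hxy
        simp only [mem_coe] at hx hy
        have hnb : ∀ z, z ∈ T ∩ closedNbrs G S → z ∉ S → z ∈ nbrs G S := by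
          intro z hz hzS
          rcases mem_union.1 (mem_inter.1 hz).2 with h | h
          · exact absurd h hzS
          · exact h
        by_cases hxS : x ∈ S <;> by_cases hyS : y ∈ S
        · simpa [hxS, hyS] using hxy
        · simp only [hxS, hyS, if_pos, if_neg, not_false_iff] at hxy
          have hadj := (hf y (hnb y hy hyS)).2
          rw [← hxy] at hadj
          exact absurd hadj (hTind y (mem_inter.1 hy).1 x (mem_inter.1 hx).1)
        · simp only [hxS, hyS, if_pos, if_neg, not_false_iff] at hxy
          have hadj := (hf x (hnb x hx hxS)).2
          rw [hxy] at hadj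
          exact absurd hadj (hTind x (mem_inter.1 hx).1 y (mem_inter.1 hy).1)
        · simp only [hxS, hyS, if_neg, not_false_iff] at hxy
          exact hfinj (hnb x hx hxS) (hnb y hy hyS) hxy
    have := Finset.card_inter_add_card_sdiff T (closedNbrs G S)
    omega

theorem crown_subset_maximum_crown (G : SimpleGraph V) [Fintype V] [DecidableEq V]
    [DecidableRel G.Adj] (S : Finset V) (hS : IsCrown G S) :
    ∃ B : Finset V, IsCrown G B ∧ S ⊆ B ∧ ∀ C : Finset V, IsCrown G C → C.card ≤ B.card := by
  classical
  set Ω : Finset (Finset V) :=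
    (univ : Finset (Finset V)).filter (fun B => IsCrown G B ∧ S ⊆ B) with hΩ
  have hSΩ : S ∈ Ω := mem_filter.2 ⟨mem_univ _, hS, subset_rfl⟩
  obtain ⟨B, hBΩ, hBmax⟩ := Finset.exists_max_image Ω Finset.card ⟨S, hSΩ⟩
  rcases mem_filter.1 hBΩ with ⟨-, hBcrown, hSB⟩
  refine ⟨B, hBcrown, hSB, fun C hC => ?_⟩
  obtain ⟨hcrown', hcard'⟩ := CrownPaper.crown_union G hBcrown hC
  have hmem : B ∪ (C \ closedNbrs G B) ∈ Ω :=
    mem_filter.2 ⟨mem_univ _, hcrown', hSB.trans subset_union_left⟩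
  exact hcard'.trans (hBmax _ hmem)
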